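/- Let P(x) = x₁·B(x) on ℓ_p (1 ≤ p < ∞). The vector x̄ = 2^{1/p}(1, 2^{-1/p}, 2^{-2/p}, 2^{-3/p}, ...) is a fixed point of P and ‖x̄‖_p = 2^{2/p} = r_P. -/

import Mathlib

open Filter

/-- On `ℓ_p` (`1 ≤ p < ∞`) with `P(x) = x₁ • B(x)` (`B` the backward shift),
the vector `x̄ = 2^(1/p) • (1, 2^(-1/p), 2^(-2/p), …)` belongs to `ℓ_p`, is a fixed point
of `P`, and `‖x̄‖_p = 2^(2/p) = r_P`. -/
theorem fixed_point_of_x1_backward_shift (p : ENNReal) [Fact (1 ≤ p)] (hp : p ≠ ⊤)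
    (P : lp (fun _ : ℕ => ℂ) p → lp (fun _ : ℕ => ℂ) p)
    (hP : ∀ (x : lp (fun _ : ℕ => ℂ) p) (j : ℕ),
      (P x : ℕ → ℂ) j = (x : ℕ → ℂ) 0 * (x : ℕ → ℂ) (j + 1)) :
    ∃ xb : lp (fun _ : ℕ => ℂ) p,
      (∀ j : ℕ, (xb : ℕ → ℂ) j
        = (((2 : ℝ) ^ ((1 : ℝ) / p.toReal) * (2 : ℝ) ^ (-(j : ℝ) / p.toReal) : ℝ) : ℂ)) ∧
      P xb = xb ∧ ‖xb‖ = (2 : ℝ) ^ ((2 : ℝ) / p.toReal) := by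
  set pt := p.toReal with hptdef
  have hpt : 0 < pt := by
    apply ENNReal.toReal_pos _ hp
    have h1 : (1 : ENNReal) ≤ p := Fact.out
    intro h; rw [h] at h1; exact absurd h1 (by simp)
  set f : ℕ → ℂ := fun j => (((2 : ℝ) ^ ((1 : ℝ) / pt) * (2 : ℝ) ^ (-(j : ℝ) / pt) : ℝ) : ℂ)
    with hfdef
  have hpos : ∀ j : ℕ, (0 : ℝ) < (2 : ℝ) ^ ((1 : ℝ) / pt) * (2 : ℝ) ^ (-(j : ℝ) / pt) :=
    fun j => mul_pos (Real.rpow_pos_of_pos two_pos _) (Real.rpow_pos_of_pos two_pos _)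
  have hnorm : ∀ j : ℕ, ‖f j‖ ^ pt = 2 * ((2 : ℝ)⁻¹) ^ j := by
    intro j
    have h2 : ‖f j‖ = (2 : ℝ) ^ ((1 : ℝ) / pt) * (2 : ℝ) ^ (-(j : ℝ) / pt) := by
      rw [hfdef]
      simp only [Complex.norm_real, Real.norm_eq_abs, abs_of_pos (hpos j)]
    rw [h2, Real.mul_rpow (Real.rpow_pos_of_pos two_pos _).le
      (Real.rpow_pos_of_pos two_pos _).le,
      ← Real.rpow_mul (by norm_num : (0:ℝ) ≤ 2), ← Real.rpow_mul (by norm_num : (0:ℝ) ≤ 2),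
      one_div_mul_cancel hpt.ne', div_mul_cancel₀ _ hpt.ne', Real.rpow_one,
      Real.rpow_neg (by norm_num : (0:ℝ) ≤ 2), Real.rpow_natCast, inv_pow]
  have hsum : Summable (fun j : ℕ => ‖f j‖ ^ pt) := by
    simp only [hnorm]
    exact (summable_geometric_of_lt_one (by norm_num) (by norm_num)).mul_left 2
  have htsum : (∑' j : ℕ, ‖f j‖ ^ pt) = 4 := by
    simp only [hnorm]
    rw [tsum_mul_left, tsum_geometric_of_lt_one (by norm_num) (by norm_num)]
    norm_num
  have hmem : Memℓp f p := memℓp_gen hsum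
  refine ⟨⟨f, hmem⟩, fun j => rfl, ?_, ?_⟩
  · apply lp.ext
    funext j
    rw [hP]
    show f 0 * f (j + 1) = f j
    rw [hfdef]
    simp only
    rw [← Complex.ofReal_mul, Complex.ofReal_inj]
    rw [show -((0:ℕ):ℝ)/pt = 0 by norm_num, Real.rpow_zero, mul_one,
      ← Real.rpow_add two_pos, ← Real.rpow_add two_pos, ← Real.rpow_add two_pos]
    congr 1
    push_cast
    field_simp
    ring
  · rw [lp.norm_eq_tsum_rpow hpt]
    show (∑' j : ℕ, ‖f j‖ ^ pt) ^ (1 / pt) = (2 : ℝ) ^ ((2:ℝ) / pt)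
    rw [htsum]
    have : (4 : ℝ) = (2 : ℝ) ^ (2 : ℝ) := by
      rw [show (2:ℝ) = ((2:ℕ):ℝ) by norm_num, Real.rpow_natCast]; norm_num
    rw [this, ← Real.rpow_mul (by norm_num : (0:ℝ) ≤ 2)]
    congr 1
    field_simp
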